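/- Let (X_i)_{i∈ℕ} be a countable family of PCSs, X_i = (I_i, P_i). Form the product web I = Σ_{i∈ℕ} I_i and let P(&X) = {u : I → ℝ≥0 | ∀ i, the function a ↦ u_{(i,a)} belongs to P_i}. For v : I_i → ℝ≥0 define ‖v‖_{X_i^⊥} = ⨆_{w ∈ P_i} ⟨w,v⟩ ∈ [0,∞]. Then for u' : I → ℝ≥0, u' ∈ P(&X)^⊥ if and only if: for every i ∈ ℕ the function u'(i) : a ↦ u'_{(i,a)} belongs to P_i^⊥, and ∑'_{i∈ℕ} ‖u'(i)‖_{X_i^⊥} ≤ 1. -/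

import Mathlib

open scoped NNReal ENNReal

/-- The pairing `⟨u,u'⟩ = ∑' i, u i * u' i` in `[0,∞]`. -/
noncomputable def pairing {I : Type*} (u u' : I → ℝ≥0) : ℝ≥0∞ :=
  ∑' i, (u i : ℝ≥0∞) * (u' i : ℝ≥0∞)

/-- The polar of a set of nonnegative vectors. -/
def polar {I : Type*} (X : Set (I → ℝ≥0)) : Set (I → ℝ≥0) :=
  {u' | ∀ u ∈ X, pairing u u' ≤ 1}

/-- A probabilistic coherence space structure on the set `P`. -/
def IsPCS {I : Type*} (P : Set (I → ℝ≥0)) : Prop :=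
  polar (polar P) = P ∧
  (∀ a : I, ∃ u ∈ P, 0 < u a) ∧
  (∀ a : I, ∃ A : ℝ≥0, 0 < A ∧ ∀ u ∈ P, u a ≤ A)

lemma zero_mem_polar {I : Type*} (S : Set (I → ℝ≥0)) : (0 : I → ℝ≥0) ∈ polar S := by
  intro u _
  simp [pairing]

lemma zero_mem_of_isPCS {I : Type*} {P : Set (I → ℝ≥0)} (hP : IsPCS P) :
    (0 : I → ℝ≥0) ∈ P := by
  rw [← hP.1]; exact zero_mem_polar _

/-- Key finite combinatorial lemma: a finite sum of suprema is bounded by `1` provided every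
finite choice gives a sum bounded by `1` (generalized over an extra summand `r`). -/
lemma sum_biSup_le {X : ℕ → Type*} (P : ∀ i, Set (X i → ℝ≥0))
    (hne : ∀ i, (0 : X i → ℝ≥0) ∈ P i)
    (g : ∀ i, (X i → ℝ≥0) → ℝ≥0∞) (F : Finset ℕ) :
    ∀ r : ℝ≥0∞,
      (∀ c : ∀ j, X j → ℝ≥0, (∀ j, c j ∈ P j) → (∑ i ∈ F, g i (c i)) + r ≤ 1) →
      (∑ i ∈ F, ⨆ w ∈ P i, g i w) + r ≤ 1 := by
  classical
  induction F using Finset.induction with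
  | empty =>
      intro r h
      simpa using h (fun _ => 0) hne
  | @insert a F haF ih =>
      intro r h
      rw [Finset.sum_insert haF, add_assoc,
        ENNReal.biSup_add (s := P a) (f := fun w => g a w) ⟨0, hne a⟩]
      refine iSup₂_le fun w hw => ?_
      have hra : g a w + ((∑ i ∈ F, ⨆ w ∈ P i, g i w) + r) =
          (∑ i ∈ F, ⨆ w ∈ P i, g i w) + (r + g a w) := by ring
      rw [hra]
      refine ih (r + g a w) fun c hc => ?_
      have hmem : ∀ j, Function.update c a w j ∈ P j := by
        intro j
        by_cases hj : j = a
        · subst hj; simpa using hw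
        · simpa [Function.update_of_ne hj] using hc j
      have := h (Function.update c a w) hmem
      rw [Finset.sum_insert haF] at this
      have hsum : ∑ i ∈ F, g i (Function.update c a w i) = ∑ i ∈ F, g i (c i) :=
        Finset.sum_congr rfl fun i hi => by
          rw [Function.update_of_ne (ne_of_mem_of_not_mem hi haF)]
      rw [Function.update_self, hsum] at this
      calc (∑ i ∈ F, g i (c i)) + (r + g a w)
          = (g a w + ∑ i ∈ F, g i (c i)) + r := by ring
        _ ≤ 1 := this

theorem with_polar_charact (X : ℕ → Type*) [∀ i, Countable (X i)]
    (P : ∀ i, Set (X i → ℝ≥0)) (hP : ∀ i, IsPCS (P i))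
    (u' : (Σ i : ℕ, X i) → ℝ≥0) :
    u' ∈ polar {u : (Σ i : ℕ, X i) → ℝ≥0 | ∀ i, (fun a => u ⟨i, a⟩) ∈ P i} ↔
      ((∀ i, (fun a => u' ⟨i, a⟩) ∈ polar (P i)) ∧
        ∑' i : ℕ, ⨆ w ∈ P i, pairing w (fun a => u' ⟨i, a⟩) ≤ 1) := by
  classical
  have hzero : ∀ i, (0 : X i → ℝ≥0) ∈ P i := fun i => zero_mem_of_isPCS (hP i)
  constructor
  · intro hu'
    have key : ∀ F : Finset ℕ, ∀ c : ∀ j, X j → ℝ≥0, (∀ j, c j ∈ P j) →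
        ∑ i ∈ F, pairing (c i) (fun a => u' ⟨i, a⟩) ≤ 1 := by
      intro F c hc
      set u : (Σ i : ℕ, X i) → ℝ≥0 := fun p => if p.1 ∈ F then c p.1 p.2 else 0 with hu
      have hmem : ∀ i, (fun a => u ⟨i, a⟩) ∈ P i := by
        intro i
        by_cases hi : i ∈ F
        · simpa [hu, hi] using hc i
        · simpa [hu, hi, Pi.zero_def] using hzero i
      have hp := hu' u hmem
      have heq : pairing u u' =
          ∑' i : ℕ, pairing (fun a => u ⟨i, a⟩) (fun a => u' ⟨i, a⟩) := by
        simp only [pairing]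
        exact ENNReal.tsum_sigma' _
      have hvanish : ∀ i ∉ F,
          pairing (fun a => u ⟨i, a⟩) (fun a => u' ⟨i, a⟩) = 0 := by
        intro i hi
        simp [pairing, hu, hi]
      have heq2 : ∑' i : ℕ, pairing (fun a => u ⟨i, a⟩) (fun a => u' ⟨i, a⟩) =
          ∑ i ∈ F, pairing (fun a => u ⟨i, a⟩) (fun a => u' ⟨i, a⟩) :=
        tsum_eq_sum hvanish
      have heq3 : ∀ i ∈ F, pairing (fun a => u ⟨i, a⟩) (fun a => u' ⟨i, a⟩) =
          pairing (c i) (fun a => u' ⟨i, a⟩) := by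
        intro i hi
        simp [pairing, hu, hi]
      calc ∑ i ∈ F, pairing (c i) (fun a => u' ⟨i, a⟩)
          = pairing u u' := by rw [heq, heq2]; exact (Finset.sum_congr rfl heq3).symm
        _ ≤ 1 := hp
    have hsum : ∑' i : ℕ, ⨆ w ∈ P i, pairing w (fun a => u' ⟨i, a⟩) ≤ 1 := by
      rw [ENNReal.tsum_eq_iSup_sum]
      refine iSup_le fun F => ?_
      have := sum_biSup_le P hzero (fun i w => pairing w (fun a => u' ⟨i, a⟩)) F 0
        (fun c hc => by simpa using key F c hc)
      simpa using this
    refine ⟨fun i w hw => ?_, hsum⟩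
    calc pairing w (fun a => u' ⟨i, a⟩)
        ≤ ⨆ w ∈ P i, pairing w (fun a => u' ⟨i, a⟩) :=
          le_iSup₂ (f := fun w (_ : w ∈ P i) => pairing w (fun a => u' ⟨i, a⟩)) w hw
      _ ≤ ∑' i : ℕ, ⨆ w ∈ P i, pairing w (fun a => u' ⟨i, a⟩) := ENNReal.le_tsum i
      _ ≤ 1 := hsum
  · rintro ⟨-, hsum⟩ u hu
    have heq : pairing u u' =
        ∑' i : ℕ, pairing (fun a => u ⟨i, a⟩) (fun a => u' ⟨i, a⟩) := by
      simp only [pairing]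
      exact ENNReal.tsum_sigma' _
    rw [heq]
    refine le_trans (ENNReal.tsum_le_tsum fun i => ?_) hsum
    exact le_iSup₂ (f := fun w (_ : w ∈ P i) => pairing w (fun a => u' ⟨i, a⟩))
      (fun a => u ⟨i, a⟩) (hu i)
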